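/- Every tree rooted at a leaf (a shrub) admits a 2-edge coloring that is an almost locally irregular coloring: either the coloring is locally irregular, or the only locally regular edge is the root edge and in that case the root edge is not adjacent to any other edge of the same color. -/

import Mathlib

/-- The number of edges of color `c` incident to vertex `v` under edge coloring `φ`
(the `c`-degree of `v`). -/
noncomputable def colorDeg {V α : Type*} (G : SimpleGraph V)
    (φ : Sym2 V → α) (c : α) (v : V) : ℕ :=
  Nat.card {w : V // G.Adj v w ∧ φ s(v, w) = c}

/-- An edge coloring of `G` is locally irregular if within every color class the
endpoints of each edge have distinct degrees (isolated vertices are irrelevant). -/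
def IsLocIrrColoring {V α : Type*} (G : SimpleGraph V) (φ : Sym2 V → α) : Prop :=
  ∀ ⦃v w : V⦄, G.Adj v w →
    colorDeg G φ (φ s(v, w)) v ≠ colorDeg G φ (φ s(v, w)) w

set_option linter.unusedSectionVars false

namespace ShrubProof
open SimpleGraph Finset


lemma shrub_claim {ι : Type*} [DecidableEq ι] (W : Finset ι) (b : ι → ℕ) :
    ∃ t ≤ W.card,
      (W.filter fun w => b w = t + 1).card ≤ W.card - t ∧
      (W.filter fun w => b w = W.card - t).card ≤ t ∧
      (t + 1 = W.card - t → (W.filter fun w => b w = t + 1) = ∅) := by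
  by_contra hcon
  set m := W.card with hm
  set cnt : ℕ → ℕ := fun s => (W.filter fun w => b w = s).card with hcnt
  have fail : ∀ t, t ≤ m → ¬ (cnt (t+1) ≤ m - t ∧ cnt (m - t) ≤ t ∧
      (t + 1 = m - t → cnt (t+1) = 0)) := by
    intro t ht h
    exact hcon ⟨t, ht, h.1, h.2.1, fun he => card_eq_zero.mp (h.2.2 he)⟩
  have cnt_le : ∀ s, cnt s ≤ m := fun s => card_filter_le _ _
  -- m ≥ 1
  have hm_pos : 1 ≤ m := by
    rcases Nat.eq_zero_or_pos m with h0 | h1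
    · refine absurd ?_ (fail 0 (by omega))
      simp only [Nat.zero_add, Nat.sub_zero]
      have := cnt_le 1
      have := cnt_le 0
      have := cnt_le m
      refine ⟨by omega, by omega, fun he => by omega⟩
    · exact h1
  -- cnt (m+1) ≥ 1
  have hm1 : 1 ≤ cnt (m+1) := by
    by_contra hc
    refine fail m le_rfl ⟨by omega, ?_, ?_⟩
    · have := cnt_le (m - m); omega
    · intro he; omega
  -- budget
  have budget : cnt (m+1) + ∑ s ∈ Ioc 0 m, cnt s ≤ m := by
    have hnotmem : (m+1) ∉ Ioc 0 m := by simp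
    have hdisj : ∀ x ∈ insert (m+1) (Ioc 0 m), ∀ y ∈ insert (m+1) (Ioc 0 m), x ≠ y →
        Disjoint (W.filter fun w => b w = x) (W.filter fun w => b w = y) := by
      intro x _ y _ hxy
      rw [Finset.disjoint_left]
      intro w hwx hwy
      simp only [mem_filter] at hwx hwy
      exact hxy (hwx.2 ▸ hwy.2 ▸ rfl)
    calc cnt (m+1) + ∑ s ∈ Ioc 0 m, cnt s
        = ∑ s ∈ insert (m+1) (Ioc 0 m), cnt s := (sum_insert hnotmem).symm
      _ = ((insert (m+1) (Ioc 0 m)).biUnion fun s => W.filter fun w => b w = s).card :=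
          (card_biUnion hdisj).symm
      _ ≤ W.card := card_le_card (by
          intro w hw
          simp only [mem_biUnion, mem_filter] at hw
          exact hw.choose_spec.2.1)
  -- pair bound
  have hpair : ∀ a, 1 ≤ a → 2*a ≤ m → 2 ≤ cnt a + cnt (m+1-a) := by
    intro a ha1 ha2
    have h1 := fail (a-1) (by omega)
    have h2 := fail (m-a) (by omega)
    have e1 : a - 1 + 1 = a := by omega
    have e2 : m - (a-1) = m+1-a := by omega
    have e3 : m - a + 1 = m+1-a := by omega
    have e4 : m - (m-a) = a := by omega
    rw [e1, e2] at h1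
    rw [e3, e4] at h2
    omega
  -- middle bound
  have hmid : m % 2 = 1 → 1 ≤ cnt (m/2 + 1) := by
    intro hodd
    have h1 := fail (m/2) (by omega)
    have e1 : m - m/2 = m/2 + 1 := by omega
    rw [e1] at h1
    omega
  -- sum over pairs
  set mh : ℕ := m / 2 with hmh
  set A : Finset ℕ := Ioc 0 mh with hA
  set A' : Finset ℕ := A.image (fun a => m+1-a) with hA'
  have hinj : ∀ x ∈ A, ∀ y ∈ A, m+1-x = m+1-y → x = y := by
    intro x hx y hy hxy
    simp only [hA, mem_Ioc] at hx hy
    omega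
  have hdisjAA : Disjoint A A' := by
    rw [Finset.disjoint_left]
    intro a haA haA'
    simp only [hA', mem_image, hA, mem_Ioc] at haA' ⊢
    obtain ⟨x, hx, hxa⟩ := haA'
    simp only [hA, mem_Ioc] at haA hx
    omega
  have hsubU : A ∪ A' ⊆ Ioc 0 m := by
    intro a haU
    rcases mem_union.mp haU with haA | haA'
    · simp only [hA, mem_Ioc] at haA ⊢; omega
    · simp only [hA', mem_image, hA, mem_Ioc] at haA'
      obtain ⟨x, hx, hxa⟩ := haA'
      simp only [mem_Ioc]; omega
  have hsumU : ∑ s ∈ A ∪ A', cnt s = ∑ a ∈ A, (cnt a + cnt (m+1-a)) := by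
    rw [sum_union hdisjAA, sum_image hinj, ← sum_add_distrib]
  have hAcard : A.card = mh := by simp [hA]
  have hpairsum : 2 * mh ≤ ∑ s ∈ A ∪ A', cnt s := by
    rw [hsumU]
    calc 2 * mh = ∑ _a ∈ A, 2 := by rw [sum_const, hAcard, smul_eq_mul]; omega
      _ ≤ ∑ a ∈ A, (cnt a + cnt (m+1-a)) := by
          apply sum_le_sum
          intro a haA
          simp only [hA, mem_Ioc] at haA
          exact hpair a (by omega) (by omega)
  have hbig : m ≤ ∑ s ∈ Ioc 0 m, cnt s := by
    rcases Nat.even_or_odd m with heven | hodd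
    · have heven' : m % 2 = 0 := Nat.even_iff.mp heven
      have h2 : 2 * mh = m := by omega
      calc m = 2 * mh := h2.symm
        _ ≤ ∑ s ∈ A ∪ A', cnt s := hpairsum
        _ ≤ ∑ s ∈ Ioc 0 m, cnt s := sum_le_sum_of_subset hsubU
    · have hodd' : m % 2 = 1 := Nat.odd_iff.mp hodd
      have hmemmid : (mh+1) ∉ A ∪ A' := by
        intro hmem
        rcases mem_union.mp hmem with hx | hx
        · simp only [hA, mem_Ioc] at hx; omega
        · simp only [hA', mem_image, hA, mem_Ioc] at hx
          obtain ⟨x, hx1, hx2⟩ := hx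
          omega
      have hsubI : insert (mh+1) (A ∪ A') ⊆ Ioc 0 m := by
        intro a ha
        rcases mem_insert.mp ha with rfl | ha
        · simp only [mem_Ioc]; omega
        · exact hsubU ha
      calc m = 1 + 2*mh := by omega
        _ ≤ cnt (mh+1) + ∑ s ∈ A ∪ A', cnt s := by
            have := hmid hodd'
            exact Nat.add_le_add (by omega) hpairsum
        _ = ∑ s ∈ insert (mh+1) (A ∪ A'), cnt s := (sum_insert hmemmid).symm
        _ ≤ ∑ s ∈ Ioc 0 m, cnt s := sum_le_sum_of_subset hsubI
  omega


open SimpleGraph Finset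

variable {V : Type*} [Fintype V] [DecidableEq V] {G : SimpleGraph V} [DecidableRel G.Adj] {r : V}

lemma isPath_concat {a b c : V} {p : G.Walk a b} (hp : p.IsPath) (h : G.Adj b c)
    (hc : c ∉ p.support) : (p.concat h).IsPath := by
  rw [Walk.isPath_def, Walk.support_concat, List.nodup_append']
  refine ⟨hp.support_nodup, List.nodup_singleton c, ?_⟩
  intro x hx hx'
  rw [List.mem_singleton] at hx'
  subst hx'
  exact hc hx

lemma dist_ne_of_adj (hT : G.IsTree) {u v : V} (huv : G.Adj u v) (r : V) :
    G.dist r u ≠ G.dist r v := by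
  intro he
  obtain ⟨p, hp, hpl⟩ := hT.isConnected.exists_path_of_dist r u
  obtain ⟨q, hq, hql⟩ := hT.isConnected.exists_path_of_dist r v
  by_cases hv : v ∈ p.support
  · have h1 : G.dist r v ≤ (p.takeUntil v hv).length := dist_le _
    have h2 : (p.takeUntil v hv).length + (p.dropUntil v hv).length = p.length := by
      rw [← Walk.length_append, p.take_spec hv]
    have hdrop0 : (p.dropUntil v hv).length = 0 := by omega
    have hvu : v = u := by
      have hl := (p.dropUntil v hv).getVert_length
      rw [hdrop0, Walk.getVert_zero] at hl
      exact hl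
    exact huv.ne' hvu
  · have hcp : (p.concat huv).IsPath := isPath_concat hp huv hv
    have hequ : (⟨p.concat huv, hcp⟩ : G.Path r v) = ⟨q, hq⟩ := hT.IsAcyclic.path_unique _ _
    have hlen : (p.concat huv).length = q.length :=
      congrArg Walk.length (Subtype.ext_iff.mp hequ)
    rw [Walk.length_concat, hpl, hql] at hlen
    omega

lemma adj_dist_cases (hT : G.IsTree) {u v : V} (huv : G.Adj u v) (r : V) :
    G.dist r u + 1 = G.dist r v ∨ G.dist r v + 1 = G.dist r u := by
  have h1 : G.dist r v ≤ G.dist r u + G.dist u v := hT.isConnected.dist_triangle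
  have h2 : G.dist r u ≤ G.dist r v + G.dist v u := hT.isConnected.dist_triangle
  have h3 : G.dist u v = 1 := dist_eq_one_iff_adj.mpr huv
  have h4 : G.dist v u = 1 := dist_eq_one_iff_adj.mpr huv.symm
  have h5 := dist_ne_of_adj hT huv r
  omega

lemma parent_unique_aux (hT : G.IsTree) {u₁ u₂ v : V}
    (h1 : G.Adj u₁ v) (h2 : G.Adj u₂ v)
    (hd1 : G.dist r u₁ + 1 = G.dist r v) (hd2 : G.dist r u₂ + 1 = G.dist r v) : u₁ = u₂ := by
  obtain ⟨p₁, hp₁, hl₁⟩ := hT.isConnected.exists_path_of_dist r u₁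
  obtain ⟨p₂, hp₂, hl₂⟩ := hT.isConnected.exists_path_of_dist r u₂
  have hv₁ : v ∉ p₁.support := by
    intro hv
    have ha := dist_le (p₁.takeUntil v hv)
    have hb := Walk.length_takeUntil_le p₁ hv
    omega
  have hv₂ : v ∉ p₂.support := by
    intro hv
    have ha := dist_le (p₂.takeUntil v hv)
    have hb := Walk.length_takeUntil_le p₂ hv
    omega
  have hc₁ : (p₁.concat h1).IsPath := isPath_concat hp₁ h1 hv₁
  have hc₂ : (p₂.concat h2).IsPath := isPath_concat hp₂ h2 hv₂
  have hequ : (⟨p₁.concat h1, hc₁⟩ : G.Path r v) = ⟨p₂.concat h2, hc₂⟩ :=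
    hT.IsAcyclic.path_unique _ _
  rw [Subtype.ext_iff] at hequ
  obtain ⟨hv', -⟩ := Walk.concat_inj hequ
  exact hv'

open Classical in
/-- The parent of `v` in the tree rooted at `r` (junk value `r` for `v = r`). -/
noncomputable def parent (G : SimpleGraph V) (r : V) (v : V) : V :=
  if h : ∃ u, G.Adj u v ∧ G.dist r u + 1 = G.dist r v then h.choose else r

lemma parent_exists (hT : G.IsTree) (r : V) {v : V} (hv : v ≠ r) :
    ∃ u, G.Adj u v ∧ G.dist r u + 1 = G.dist r v := by
  have hd : 0 < G.dist v r := hT.isConnected.pos_dist_of_ne hv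
  obtain ⟨q, hql⟩ := (hT.isConnected v r).exists_walk_length_eq_dist
  have hnn : ¬ q.Nil := by
    intro hn
    rw [Walk.nil_iff_length_eq] at hn
    omega
  obtain ⟨u, hadj, q', rfl⟩ := Walk.not_nil_iff.mp hnn
  have hq'len : G.dist r u ≤ q'.length := by
    rw [dist_comm]
    exact dist_le q'
  have hlen : q'.length + 1 = G.dist v r := by simpa using hql
  have hdvr : G.dist r v = G.dist v r := dist_comm
  rcases adj_dist_cases hT hadj.symm r with hc | hc
  · exact ⟨u, hadj.symm, hc⟩
  · omega

lemma parent_spec (hT : G.IsTree) (r : V) {v : V} (hv : v ≠ r) :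
    G.Adj (parent G r v) v ∧ G.dist r (parent G r v) + 1 = G.dist r v := by
  have h := parent_exists hT r hv
  simp only [parent, dif_pos h]
  exact h.choose_spec

lemma parent_r (G : SimpleGraph V) (r : V) : parent G r r = r := by
  simp only [parent]
  rw [dif_neg]
  rintro ⟨u, -, hd⟩
  rw [SimpleGraph.dist_self] at hd
  omega

lemma parent_eq (hT : G.IsTree) (r : V) {u v : V} (h : G.Adj u v)
    (hd : G.dist r u + 1 = G.dist r v) : parent G r v = u := by
  have hv : v ≠ r := by
    intro h'
    subst h'
    rw [SimpleGraph.dist_self] at hd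
    omega
  obtain ⟨ha, hd'⟩ := parent_spec hT r hv
  exact parent_unique_aux hT ha h hd' hd

lemma adj_parent_cases (hT : G.IsTree) (r : V) {u v : V} (h : G.Adj u v) :
    (v ≠ r ∧ parent G r v = u) ∨ (u ≠ r ∧ parent G r u = v) := by
  rcases adj_dist_cases hT h r with hc | hc
  · left
    have hv : v ≠ r := by
      intro h'
      subst h'
      rw [SimpleGraph.dist_self] at hc
      omega
    exact ⟨hv, parent_eq hT r h hc⟩
  · right
    have hu : u ≠ r := by
      intro h'
      subst h'
      rw [SimpleGraph.dist_self] at hc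
      omega
    exact ⟨hu, parent_eq hT r h.symm hc⟩

lemma iter_parent_dist (hT : G.IsTree) (r : V) (v : V) : ∀ n, n ≤ G.dist r v →
    G.dist r ((parent G r)^[n] v) = G.dist r v - n := by
  intro n
  induction n with
  | zero => simp
  | succ k ih =>
    intro hk
    have hih := ih (by omega)
    have hne : (parent G r)^[k] v ≠ r := by
      intro h0
      rw [h0, SimpleGraph.dist_self] at hih
      omega
    obtain ⟨-, hd⟩ := parent_spec hT r hne
    rw [Function.iterate_succ_apply']
    omega

lemma iter_parent_r (G : SimpleGraph V) (r : V) (n : ℕ) : (parent G r)^[n] r = r :=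
  Function.iterate_fixed (parent_r G r) n

/-- The children of `u` in the tree rooted at `r`. -/
noncomputable def kids (G : SimpleGraph V) [DecidableRel G.Adj] (r : V) (u : V) : Finset V :=
  Finset.univ.filter fun v => v ≠ r ∧ parent G r v = u

/-- Descendants of `u` (including `u`). -/
noncomputable def Desc (G : SimpleGraph V) [DecidableRel G.Adj] (r : V) (u : V) : Finset V :=
  Finset.univ.filter fun v => (parent G r)^[G.dist r v - G.dist r u] v = u

/-- Degree of `v` in color class `β`, for the edge coloring determined by `c`
(where `c v` is the color of the edge from `v` to its parent). -/
noncomputable def Deg (G : SimpleGraph V) [DecidableRel G.Adj] (r : V)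
    (c : V → Fin 2) (β : Fin 2) (v : V) : ℕ :=
  ((kids G r v).filter fun w => c w = β).card + (if v ≠ r ∧ c v = β then 1 else 0)

lemma mem_kids {u w : V} : w ∈ kids G r u ↔ w ≠ r ∧ parent G r w = u := by
  simp [kids]

lemma mem_Desc {u v : V} : v ∈ Desc G r u ↔ (parent G r)^[G.dist r v - G.dist r u] v = u := by
  simp [Desc]

lemma self_mem_Desc {u : V} : u ∈ Desc G r u := by
  rw [mem_Desc, Nat.sub_self]
  rfl

lemma Desc_lt_depth {u v : V} (hv : v ∈ Desc G r u) (hne : v ≠ u) :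
    G.dist r u < G.dist r v := by
  rw [mem_Desc] at hv
  by_contra hle
  push_neg at hle
  rw [Nat.sub_eq_zero_of_le hle] at hv
  exact hne hv

lemma r_not_mem_Desc {u : V} (hu : u ≠ r) : r ∉ Desc G r u := by
  rw [mem_Desc, iter_parent_r]
  exact fun h => hu h.symm

lemma ne_r_of_mem_Desc {u v : V} (hu : u ≠ r) (hv : v ∈ Desc G r u) : v ≠ r :=
  fun h => r_not_mem_Desc hu (h ▸ hv)

lemma mem_Desc_of_kid (hT : G.IsTree) {u w : V} (hu : u ≠ r) (hw : w ∈ kids G r u) :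
    w ∈ Desc G r u ∧ G.dist r w = G.dist r u + 1 := by
  rw [mem_kids] at hw
  obtain ⟨hwr, hpw⟩ := hw
  have hd := (parent_spec hT r hwr).2
  rw [hpw] at hd
  constructor
  · rw [mem_Desc]
    have he : G.dist r w - G.dist r u = 1 := by omega
    rw [he, Function.iterate_one]
    exact hpw
  · omega

lemma Desc_trans_kid (hT : G.IsTree) {u w : V} (hu : u ≠ r) (hw : w ∈ kids G r u) :
    Desc G r w ⊆ Desc G r u := by
  intro v hv
  obtain ⟨hwD, hdw⟩ := mem_Desc_of_kid hT hu hw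
  by_cases hvw : v = w
  · subst hvw
    exact hwD
  · have hlt := Desc_lt_depth hv hvw
    rw [mem_Desc] at hv ⊢
    have he : G.dist r v - G.dist r u = (G.dist r v - G.dist r w) + 1 := by omega
    rw [he, Function.iterate_succ_apply', hv]
    rw [mem_kids] at hw
    exact hw.2

lemma not_mem_Desc_kid (hT : G.IsTree) {u w : V} (hu : u ≠ r) (hw : w ∈ kids G r u) :
    u ∉ Desc G r w := by
  intro h
  have hdw := (mem_Desc_of_kid hT hu hw).2
  by_cases huw : u = w
  · subst huw
    omega
  · have := Desc_lt_depth h huw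
    omega

lemma kid_unique (hT : G.IsTree) {u w₁ w₂ v : V} (hu : u ≠ r)
    (h1 : w₁ ∈ kids G r u) (h2 : w₂ ∈ kids G r u)
    (hv1 : v ∈ Desc G r w₁) (hv2 : v ∈ Desc G r w₂) : w₁ = w₂ := by
  have hd1 := (mem_Desc_of_kid hT hu h1).2
  have hd2 := (mem_Desc_of_kid hT hu h2).2
  by_cases he1 : v = w₁
  · subst he1
    by_cases he2 : v = w₂
    · exact he2
    · have := Desc_lt_depth hv2 he2
      omega
  · by_cases he2 : v = w₂
    · subst he2
      have := Desc_lt_depth hv1 he1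
      omega
    · rw [mem_Desc] at hv1 hv2
      have he : G.dist r v - G.dist r w₁ = G.dist r v - G.dist r w₂ := by omega
      rw [he] at hv1
      exact hv1.symm.trans hv2

lemma kids_sub_Desc (hT : G.IsTree) {u v x : V} (hu : u ≠ r)
    (hv : v ∈ Desc G r u) (hx : x ∈ kids G r v) : x ∈ Desc G r u := by
  have hvr : v ≠ r := ne_r_of_mem_Desc hu hv
  have hdx := (mem_Desc_of_kid hT hvr hx).2
  have hdvu : G.dist r u ≤ G.dist r v := by
    by_cases hvu : v = u
    · subst hvu; exact le_rfl
    · exact le_of_lt (Desc_lt_depth hv hvu)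
  rw [mem_Desc] at hv ⊢
  have he : G.dist r x - G.dist r u = (G.dist r v - G.dist r u) + 1 := by omega
  rw [he, Function.iterate_succ_apply]
  rw [mem_kids] at hx
  rw [hx.2]
  exact hv

lemma parent_mem_Desc (hT : G.IsTree) {u v : V} (hu : u ≠ r)
    (hv : v ∈ Desc G r u) (hne : v ≠ u) : parent G r v ∈ Desc G r u := by
  have hvr : v ≠ r := ne_r_of_mem_Desc hu hv
  have hlt := Desc_lt_depth hv hne
  have hdp := (parent_spec hT r hvr).2
  rw [mem_Desc] at hv ⊢
  have he : G.dist r (parent G r v) - G.dist r u = (G.dist r v - G.dist r u) - 1 := by omega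
  have he2 : (G.dist r v - G.dist r u - 1) + 1 = G.dist r v - G.dist r u := by omega
  have h2 : (parent G r)^[(G.dist r v - G.dist r u - 1)+1] v
      = (parent G r)^[G.dist r v - G.dist r u - 1] (parent G r v) :=
    Function.iterate_succ_apply _ _ _
  rw [he, ← h2, he2]
  exact hv

/-- The child of `u` through which a proper descendant `v` hangs. -/
noncomputable def chld (G : SimpleGraph V) (r : V) (u v : V) : V :=
  (parent G r)^[G.dist r v - G.dist r u - 1] v

lemma chld_spec (hT : G.IsTree) {u v : V} (hu : u ≠ r) (hv : v ∈ Desc G r u) (hne : v ≠ u) :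
    chld G r u v ∈ kids G r u ∧ v ∈ Desc G r (chld G r u v) := by
  have hlt := Desc_lt_depth hv hne
  rw [mem_Desc] at hv
  set n := G.dist r v - G.dist r u with hn
  have hn1 : 1 ≤ n := by omega
  have hwdef : chld G r u v = (parent G r)^[n-1] v := rfl
  have hpw : parent G r (chld G r u v) = u := by
    have h2 : (parent G r)^[(n-1)+1] v = parent G r ((parent G r)^[n-1] v) :=
      Function.iterate_succ_apply' _ _ _
    rw [hwdef, ← h2, show n - 1 + 1 = n from by omega]
    exact hv
  have hwr : chld G r u v ≠ r := by
    intro h0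
    rw [h0, parent_r] at hpw
    exact hu hpw.symm
  have hwk : chld G r u v ∈ kids G r u := mem_kids.mpr ⟨hwr, hpw⟩
  refine ⟨hwk, ?_⟩
  have hdw : G.dist r (chld G r u v) = G.dist r v - (n-1) := by
    rw [hwdef]
    exact iter_parent_dist hT r v (n-1) (by omega)
  rw [mem_Desc]
  have he : G.dist r v - G.dist r (chld G r u v) = n - 1 := by omega
  rw [he]
  exact hwdef.symm

lemma Deg_congr {c₁ c₂ : V → Fin 2} {β : Fin 2} {x : V}
    (h1 : ∀ y ∈ kids G r x, c₁ y = c₂ y) (h2 : c₁ x = c₂ x) :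
    Deg G r c₁ β x = Deg G r c₂ β x := by
  unfold Deg
  congr 1
  · apply congrArg
    apply filter_congr
    intro y hy
    rw [h1 y hy]
  · rw [h2]

/-- The edge coloring determined by per-vertex colors: the edge from `v` to its
parent gets color `c v`. -/
noncomputable def mkCol (G : SimpleGraph V) (r : V) (c : V → Fin 2) : Sym2 V → Fin 2 :=
  Sym2.lift ⟨fun x y =>
      if G.dist r x < G.dist r y then c y else if G.dist r y < G.dist r x then c x else 0, by
    intro x y
    dsimp only
    rcases lt_trichotomy (G.dist r x) (G.dist r y) with h | h | h
    · rw [if_pos h, if_neg (by omega), if_pos h]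
    · rw [if_neg (by omega), if_neg (by omega), if_neg (by omega), if_neg (by omega)]
    · rw [if_neg (by omega), if_pos h, if_pos h]⟩

lemma mkCol_eval {c : V → Fin 2} {x y : V} (h : G.dist r x < G.dist r y) :
    mkCol G r c s(x, y) = c y := by
  simp only [mkCol, Sym2.lift_mk]
  rw [if_pos h]

lemma mkCol_edge (hT : G.IsTree) {c : V → Fin 2} {w : V} (hw : w ≠ r) :
    mkCol G r c s(parent G r w, w) = c w := by
  have := (parent_spec hT r hw).2
  exact mkCol_eval (by omega)

lemma colorDeg_eq_Deg (hT : G.IsTree) (r : V) (c : V → Fin 2) (β : Fin 2) (v : V) :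
    colorDeg G (mkCol G r c) β v = Deg G r c β v := by
  have hcard : colorDeg G (mkCol G r c) β v
      = (univ.filter fun w => G.Adj v w ∧ mkCol G r c s(v, w) = β).card := by
    rw [colorDeg, Nat.card_eq_fintype_card]
    exact Fintype.card_subtype _
  have hkids : ∀ w ∈ (kids G r v).filter (fun w => c w = β),
      G.Adj v w ∧ mkCol G r c s(v, w) = β := by
    intro w hw
    rw [mem_filter, mem_kids] at hw
    obtain ⟨⟨hwr, hpw⟩, hcw⟩ := hw
    have hadj := (parent_spec hT r hwr).1
    rw [hpw] at hadj
    refine ⟨hadj, ?_⟩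
    have : mkCol G r c s(v, w) = c w := by
      rw [← hpw]
      exact mkCol_edge hT hwr
    rw [this, hcw]
  by_cases hcond : v ≠ r ∧ c v = β
  · have hsplit : (univ.filter fun w => G.Adj v w ∧ mkCol G r c s(v, w) = β)
        = ((kids G r v).filter fun w => c w = β) ∪ {parent G r v} := by
      ext w
      simp only [mem_filter, mem_univ, true_and, mem_union, mem_singleton, mem_kids]
      constructor
      · rintro ⟨hadj, hcol⟩
        rcases adj_parent_cases hT r hadj with ⟨hwr, hpw⟩ | ⟨hvr, hpv⟩
        · left
          refine ⟨⟨hwr, hpw⟩, ?_⟩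
          rw [← hcol, ← hpw]
          exact (mkCol_edge hT hwr).symm
        · right
          exact hpv.symm
      · rintro (hw | hw)
        · have := hkids w (by rw [mem_filter, mem_kids]; exact hw)
          exact this
        · subst hw
          have hadj := (parent_spec hT r hcond.1).1
          refine ⟨hadj.symm, ?_⟩
          rw [Sym2.eq_swap]
          rw [mkCol_edge hT hcond.1]
          exact hcond.2
    have hdisj : Disjoint ((kids G r v).filter fun w => c w = β) ({parent G r v} : Finset V) := by
      rw [Finset.disjoint_right]
      intro w hw hw'
      rw [mem_singleton] at hw
      rw [mem_filter, mem_kids] at hw'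
      obtain ⟨⟨hwr, hpw⟩, -⟩ := hw'
      subst hw
      have h1 := (parent_spec hT r hwr).2
      have h2 := (parent_spec hT r hcond.1).2
      rw [hpw] at h1
      omega
    rw [hcard, hsplit, card_union_of_disjoint hdisj, card_singleton, Deg, if_pos hcond]
  · have hsplit : (univ.filter fun w => G.Adj v w ∧ mkCol G r c s(v, w) = β)
        = ((kids G r v).filter fun w => c w = β) := by
      ext w
      simp only [mem_filter, mem_univ, true_and, mem_kids]
      constructor
      · rintro ⟨hadj, hcol⟩
        rcases adj_parent_cases hT r hadj with ⟨hwr, hpw⟩ | ⟨hvr, hpv⟩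
        · refine ⟨⟨hwr, hpw⟩, ?_⟩
          rw [← hcol, ← hpw]
          exact (mkCol_edge hT hwr).symm
        · exfalso
          apply hcond
          refine ⟨hvr, ?_⟩
          rw [← hcol, ← hpv, Sym2.eq_swap, mkCol_edge hT hvr]
      · intro hw
        exact hkids w (by rw [mem_filter, mem_kids]; exact hw)
    rw [hcard, hsplit, Deg, if_neg hcond]
    omega


theorem key (hT : G.IsTree) (r : V) : ∀ (n : ℕ) (u : V), (Desc G r u).card ≤ n → u ≠ r →
    ∃ bad : ℕ, ∀ (α : Fin 2) (K : ℕ), K ≠ bad →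
      ∃ c : V → Fin 2, c u = α ∧ Deg G r c α u ≠ K ∧
        ∀ v ∈ Desc G r u, v ≠ u →
          Deg G r c (c v) (parent G r v) ≠ Deg G r c (c v) v := by
  intro n
  induction n with
  | zero =>
    intro u hcard hur
    have : 0 < (Desc G r u).card := card_pos.mpr ⟨u, self_mem_Desc⟩
    omega
  | succ n IH =>
    intro u hcard hur
    have hIH : ∀ w ∈ kids G r u, ∃ bad : ℕ, ∀ (α : Fin 2) (K : ℕ), K ≠ bad →
        ∃ c : V → Fin 2, c w = α ∧ Deg G r c α w ≠ K ∧
          ∀ v ∈ Desc G r w, v ≠ w →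
            Deg G r c (c v) (parent G r v) ≠ Deg G r c (c v) v := by
      intro w hw
      apply IH w ?_ (mem_kids.mp hw).1
      have hsub : Desc G r w ⊆ Desc G r u := Desc_trans_kid hT hur hw
      have hss : Desc G r w ⊂ Desc G r u :=
        ⟨hsub, fun hsub' => not_mem_Desc_kid hT hur hw (hsub' self_mem_Desc)⟩
      have := card_lt_card hss
      omega
    choose! b hb using hIH
    obtain ⟨t, htm, h1, h2, h3⟩ := shrub_claim (kids G r u) b
    refine ⟨t + 1, ?_⟩
    intro α K hK
    have hYsub : ((kids G r u).filter fun w => b w = (kids G r u).card - t)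
        ⊆ (kids G r u) \ ((kids G r u).filter fun w => b w = t + 1) := by
      intro w hwY
      rw [mem_sdiff]
      rw [mem_filter] at hwY
      refine ⟨hwY.1, ?_⟩
      intro hwX
      rw [mem_filter] at hwX
      by_cases heq : t + 1 = (kids G r u).card - t
      · have h0 := h3 heq
        rw [eq_empty_iff_forall_notMem] at h0
        exact h0 w (mem_filter.mpr hwX)
      · have := hwX.2
        have := hwY.2
        omega
    have hWX : t ≤ ((kids G r u) \ ((kids G r u).filter fun w => b w = t + 1)).card := by
      have hc := card_sdiff_of_subset (filter_subset (fun w => b w = t + 1) (kids G r u))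
      omega
    obtain ⟨A, hYA, hAWX, hAcard⟩ := exists_subsuperset_card_eq hYsub h2 hWX
    have hAW : A ⊆ kids G r u := hAWX.trans sdiff_subset
    have hKok : ∀ w ∈ kids G r u,
        (if w ∈ A then t + 1 else (kids G r u).card - t) ≠ b w := by
      intro w hwW
      by_cases hwA : w ∈ A
      · rw [if_pos hwA]
        intro hbad
        have hwX : w ∈ (kids G r u).filter fun w => b w = t + 1 :=
          mem_filter.mpr ⟨hwW, hbad.symm⟩
        have hmem := hAWX hwA
        rw [mem_sdiff] at hmem
        exact hmem.2 hwX
      · rw [if_neg hwA]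
        intro hbad
        have hwY : w ∈ (kids G r u).filter fun w => b w = (kids G r u).card - t :=
          mem_filter.mpr ⟨hwW, hbad.symm⟩
        exact hwA (hYA hwY)
    have hbuild : ∀ w ∈ kids G r u, ∃ c : V → Fin 2,
        c w = (if w ∈ A then α else α + 1) ∧
        Deg G r c (if w ∈ A then α else α + 1) w ≠ (if w ∈ A then t + 1 else (kids G r u).card - t) ∧
        ∀ v ∈ Desc G r w, v ≠ w →
          Deg G r c (c v) (parent G r v) ≠ Deg G r c (c v) v := by
      intro w hw
      exact hb w hw _ _ (hKok w hw)
    choose! cf hcf1 hcf2 hcf3 using hbuild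
    classical
    set c : V → Fin 2 :=
      fun v => if v ∈ Desc G r u ∧ v ≠ u then cf (chld G r u v) v else α with hc
    have hcu : c u = α := by
      rw [hc]
      simp only []
      rw [if_neg]
      rintro ⟨-, h⟩
      exact h rfl
    have hagree : ∀ w ∈ kids G r u, ∀ v ∈ Desc G r w, c v = cf w v := by
      intro w hwW v hv
      have hvDu : v ∈ Desc G r u := Desc_trans_kid hT hur hwW hv
      have hvu : v ≠ u := fun h => not_mem_Desc_kid hT hur hwW (h ▸ hv)
      have hch := chld_spec hT hur hvDu hvu
      have hcw : chld G r u v = w := kid_unique hT hur hch.1 hwW hch.2 hv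
      rw [hc]
      simp only []
      rw [if_pos ⟨hvDu, hvu⟩, hcw]
    have hkidcol : ∀ w ∈ kids G r u, c w = (if w ∈ A then α else α + 1) := by
      intro w hwW
      rw [hagree w hwW w self_mem_Desc, hcf1 w hwW]
    have hα1 : (α : Fin 2) + 1 ≠ α := by
      fin_cases α <;> decide
    have hfiltα : (kids G r u).filter (fun w => c w = α) = A := by
      ext w
      rw [mem_filter]
      constructor
      · rintro ⟨hwW, hcw⟩
        rw [hkidcol w hwW] at hcw
        by_cases hwA : w ∈ A
        · exact hwA
        · rw [if_neg hwA] at hcw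
          exact absurd hcw hα1
      · intro hwA
        refine ⟨hAW hwA, ?_⟩
        rw [hkidcol w (hAW hwA), if_pos hwA]
    have hfiltα1 : (kids G r u).filter (fun w => c w = α + 1) = (kids G r u) \ A := by
      ext w
      rw [mem_filter, mem_sdiff]
      constructor
      · rintro ⟨hwW, hcw⟩
        refine ⟨hwW, ?_⟩
        intro hwA
        rw [hkidcol w hwW, if_pos hwA] at hcw
        exact hα1 hcw.symm
      · rintro ⟨hwW, hwA⟩
        refine ⟨hwW, ?_⟩
        rw [hkidcol w hwW, if_neg hwA]
    have hDegα : Deg G r c α u = t + 1 := by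
      unfold Deg
      rw [hfiltα, hAcard, if_pos ⟨hur, hcu⟩]
    have hDegα1 : Deg G r c (α + 1) u = (kids G r u).card - t := by
      unfold Deg
      rw [hfiltα1, card_sdiff_of_subset hAW, hAcard]
      rw [if_neg]
      · omega
      · rintro ⟨-, hcu'⟩
        rw [hcu] at hcu'
        exact hα1 hcu'.symm
    refine ⟨c, hcu, ?_, ?_⟩
    · rw [hDegα]
      exact Ne.symm hK
    · intro v hvD hvu
      have hch := chld_spec hT hur hvD hvu
      have hwW : chld G r u v ∈ kids G r u := hch.1
      have hvDw : v ∈ Desc G r (chld G r u v) := hch.2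
      have hwr : chld G r u v ≠ r := (mem_kids.mp hwW).1
      have htrans : ∀ (β : Fin 2), ∀ x ∈ Desc G r (chld G r u v),
          Deg G r c β x = Deg G r (cf (chld G r u v)) β x := by
        intro β x hx
        apply Deg_congr
        · intro y hy
          exact hagree _ hwW y (kids_sub_Desc hT hwr hx hy)
        · exact hagree _ hwW x hx
      by_cases hvw : v = chld G r u v
      · rw [← hvw] at hwW htrans
        have hpv : parent G r v = u := (mem_kids.mp hwW).2
        have hcv : c v = (if v ∈ A then α else α + 1) := hkidcol _ hwW
        rw [hpv, hcv]
        have hR : Deg G r c (if v ∈ A then α else α + 1) v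
            = Deg G r (cf v) (if v ∈ A then α else α + 1) v := htrans _ v self_mem_Desc
        have hL : Deg G r c (if v ∈ A then α else α + 1) u
            = (if v ∈ A then t + 1 else (kids G r u).card - t) := by
          by_cases hvA : v ∈ A
          · rw [if_pos hvA, if_pos hvA]
            exact hDegα
          · rw [if_neg hvA, if_neg hvA]
            exact hDegα1
        rw [hL, hR]
        exact Ne.symm (hcf2 v hwW)
      · have hpvD : parent G r v ∈ Desc G r (chld G r u v) :=
          parent_mem_Desc hT hwr hvDw hvw
        have hcv : c v = cf (chld G r u v) v := hagree _ hwW v hvDw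
        rw [hcv, htrans _ _ hpvD, htrans _ _ hvDw]
        exact hcf3 _ hwW v hvDw hvw

end ShrubProof

set_option maxHeartbeats 1600000 in
open SimpleGraph Finset ShrubProof in
/-- Every shrub (a tree rooted at a leaf r, with root edge r r') admits a 2-edge
coloring that is almost locally irregular: either the coloring is locally
irregular, or every edge other than the root edge is locally irregular and the
root edge is not adjacent to any other edge of the same color. -/
theorem shrub_admits_two_aliec {V : Type*} [Fintype V] [DecidableEq V]
    (G : SimpleGraph V) [DecidableRel G.Adj] (hT : G.IsTree)
    (r r' : V) (hr : G.degree r = 1) (hrr' : G.Adj r r') :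
    ∃ φ : Sym2 V → Fin 2,
      (∀ ⦃v w : V⦄, G.Adj v w → s(v, w) ≠ s(r, r') →
        colorDeg G φ (φ s(v, w)) v ≠ colorDeg G φ (φ s(v, w)) w) ∧
      (IsLocIrrColoring G φ ∨
        ∀ x, G.Adj r' x → x ≠ r → φ s(r', x) ≠ φ s(r, r')) := by
  classical
  have hrr'' : r' ≠ r := hrr'.ne'
  have hd0 : G.dist r r = 0 := SimpleGraph.dist_self
  have hdr' : G.dist r r' = 1 := by
    rcases adj_dist_cases hT hrr' r with h | h <;> omega
  have hpr' : parent G r r' = r := parent_eq hT r hrr' (by omega)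
  have huniq : ∀ x, G.Adj r x → x = r' := by
    intro x hx
    have h1 : x ∈ G.neighborFinset r := by rwa [mem_neighborFinset]
    have h2 : r' ∈ G.neighborFinset r := by rwa [mem_neighborFinset]
    have hcard : (G.neighborFinset r).card ≤ 1 := le_of_eq hr
    exact Finset.card_le_one.mp hcard x h1 r' h2
  have hDesc : ∀ v : V, v ≠ r → v ∈ Desc G r r' := by
    intro v hv
    have hdv : 1 ≤ G.dist r v := by
      have := hT.isConnected.pos_dist_of_ne (Ne.symm hv)
      omega
    have hdx : G.dist r ((parent G r)^[G.dist r v - 1] v) = 1 := by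
      have := iter_parent_dist hT r v (G.dist r v - 1) (by omega)
      omega
    have hxr : (parent G r)^[G.dist r v - 1] v ≠ r := by
      intro h0
      rw [h0] at hdx
      omega
    have hxr' : (parent G r)^[G.dist r v - 1] v = r' := by
      apply huniq
      have hpx : parent G r ((parent G r)^[G.dist r v - 1] v) = r := by
        have hd := (parent_spec hT r hxr).2
        have h0 : G.dist r (parent G r ((parent G r)^[G.dist r v - 1] v)) = 0 := by omega
        exact (hT.isConnected.dist_eq_zero_iff.mp h0).symm
      have := (parent_spec hT r hxr).1
      rwa [hpx] at this
    rw [mem_Desc, hdr']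
    exact hxr'
  obtain ⟨bad, hbad⟩ := key hT r (Desc G r r').card r' le_rfl hrr''
  obtain ⟨c, hc0, -, hirr⟩ := hbad 0 (bad + 1) (by omega)
  have hroot : mkCol G r c s(r, r') = c r' := mkCol_eval (by omega)
  have hordered : ∀ w, w ≠ r → w ≠ r' →
      colorDeg G (mkCol G r c) (mkCol G r c s(parent G r w, w)) (parent G r w)
        ≠ colorDeg G (mkCol G r c) (mkCol G r c s(parent G r w, w)) w := by
    intro w hwr hwr'
    have hwD : w ∈ Desc G r r' := hDesc w hwr
    have hIrr := hirr w hwD hwr'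
    rw [mkCol_edge hT hwr, colorDeg_eq_Deg hT r c (c w) _, colorDeg_eq_Deg hT r c (c w) w]
    exact hIrr
  have hpart1 : ∀ ⦃v w : V⦄, G.Adj v w → s(v, w) ≠ s(r, r') →
      colorDeg G (mkCol G r c) (mkCol G r c s(v, w)) v
        ≠ colorDeg G (mkCol G r c) (mkCol G r c s(v, w)) w := by
    intro v w hadj hne
    rcases adj_parent_cases hT r hadj with ⟨hwr, hpw⟩ | ⟨hvr, hpv⟩
    · have hwr' : w ≠ r' := by
        intro h0
        subst h0
        rw [hpr'] at hpw
        apply hne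
        rw [← hpw]
      have h := hordered w hwr hwr'
      rwa [hpw] at h
    · have hvr' : v ≠ r' := by
        intro h0
        subst h0
        rw [hpr'] at hpv
        apply hne
        rw [← hpv]
        exact Sym2.eq_swap
      have h := hordered v hvr hvr'
      rw [hpv] at h
      rw [show s(v, w) = s(w, v) from Sym2.eq_swap]
      exact Ne.symm h
  refine ⟨mkCol G r c, hpart1, ?_⟩
  by_cases hn : ((kids G r r').filter fun w => c w = 0).card = 0
  · right
    intro x hx hxr
    rcases adj_parent_cases hT r hx with ⟨hxr2, hpx⟩ | ⟨-, hpr2⟩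
    · have hxK : x ∈ kids G r r' := mem_kids.mpr ⟨hxr2, hpx⟩
      have hφx : mkCol G r c s(r', x) = c x := by
        rw [← hpx]
        exact mkCol_edge hT hxr2
      rw [hφx, hroot, hc0]
      intro h0
      have hmem : x ∈ (kids G r r').filter fun w => c w = 0 := mem_filter.mpr ⟨hxK, h0⟩
      have := card_pos.mpr ⟨x, hmem⟩
      omega
    · rw [hpr'] at hpr2
      exact absurd hpr2.symm hxr
  · left
    intro v w hadj
    by_cases hne : s(v, w) = s(r, r')
    · have hkr : kids G r r = {r'} := by
        ext y
        rw [mem_kids, mem_singleton]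
        constructor
        · rintro ⟨hyr, hpy⟩
          apply huniq
          have := (parent_spec hT r hyr).1
          rwa [hpy] at this
        · rintro rfl
          exact ⟨hrr'', hpr'⟩
      have hDr : Deg G r c 0 r = 1 := by
        unfold Deg
        rw [if_neg (by simp), hkr, filter_singleton, if_pos hc0, card_singleton]
      have hDr' : Deg G r c 0 r' ≠ 1 := by
        unfold Deg
        rw [if_pos ⟨hrr'', hc0⟩]
        omega
      have hcolr : colorDeg G (mkCol G r c) 0 r = 1 := by
        rw [colorDeg_eq_Deg hT r c 0 r]
        exact hDr
      have hcolr' : colorDeg G (mkCol G r c) 0 r' ≠ 1 := by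
        rw [colorDeg_eq_Deg hT r c 0 r']
        exact hDr'
      rcases Sym2.eq_iff.mp hne with ⟨hv, hw⟩ | ⟨hv, hw⟩
      · rw [hne, hv, hw, hroot, hc0, hcolr]
        exact fun h => hcolr' h.symm
      · rw [hne, hv, hw, hroot, hc0, hcolr]
        exact hcolr'
    · exact hpart1 hadj hne
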